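/- Let f(x) = 1 + Σ_{n≥1} x^n b_n(f) and g(x) = x + Σ_{n≥1} x^{n+1} a_n(g) be formal power series over ℂ. Then b_n(f∘g) = b_n(f) + Σ_{m=1}^{n-1} Q^{n-m-1}_m(a_*(g)) b_{n-m}(f) for all n ≥ 1. -/

import Mathlib

/-- The symmetric polynomial
`P_m^{(k)}(a) = Σ_{j_1+···+j_k = m, j_i ≥ 1} a_{j_1}···a_{j_k}`. -/
noncomputable def Pp {A : Type*} [Ring A] (a : ℕ → A) (k m : ℕ) : A :=
  ∑ j : Fin k → Fin (m + 1),
    if (∀ i, 1 ≤ (j i : ℕ)) ∧ (∑ i, (j i : ℕ)) = m then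
      (List.ofFn fun i => a ((j i : ℕ))).prod
    else 0

/-- `Q^l_m(a) = Σ_{k=1}^m C(l+1,k) P^{(k)}_m(a)`, with `C(l+1,k) = 0` for `k > l+1`. -/
noncomputable def Qp {A : Type*} [Ring A] (a : ℕ → A) (l m : ℕ) : A :=
  ∑ k ∈ Finset.Icc 1 m, ((l + 1).choose k) • Pp a k m

/-- Composition `f ∘ g` of formal power series (for `g` with zero constant term):
the `N`-th coefficient is `Σ_{k=0}^{N} (coeff k f) · (coeff N g^k)`. -/
noncomputable def comp (f g : PowerSeries ℂ) : PowerSeries ℂ :=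
  PowerSeries.mk fun N =>
    ∑ k ∈ Finset.range (N + 1),
      (PowerSeries.coeff (R := ℂ) k f) * PowerSeries.coeff (R := ℂ) N (g ^ k)

section Aux

variable {A : Type*} [Ring A] (a : ℕ → A)

lemma Pp_zero_left (m : ℕ) : Pp a 0 m = if m = 0 then 1 else 0 := by
  simp [Pp, eq_comm]

lemma Pp_eq_zero_of_lt (k m : ℕ) (h : m < k) : Pp a k m = 0 := by
  apply Finset.sum_eq_zero
  intro j _
  rw [if_neg]
  rintro ⟨h1, h2⟩
  have hk : k ≤ ∑ i, (j i : ℕ) := by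
    calc k = ∑ _i : Fin k, 1 := by simp
    _ ≤ ∑ i, (j i : ℕ) := Finset.sum_le_sum fun i _ => h1 i
  omega

lemma Pp_zero_right (k : ℕ) : Pp a k 0 = if k = 0 then 1 else 0 := by
  cases k with
  | zero => simp [Pp_zero_left]
  | succ k => rw [Pp_eq_zero_of_lt a _ 0 (Nat.succ_pos k), if_neg (Nat.succ_ne_zero k)]

lemma Pp_congr (a b : ℕ → A) (hab : ∀ j, 1 ≤ j → a j = b j) (k m : ℕ) :
    Pp a k m = Pp b k m := by
  apply Finset.sum_congr rfl
  intro j _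
  split
  · next h =>
    have : (fun i => a ((j i : ℕ))) = fun i => b ((j i : ℕ)) :=
      funext fun i => hab _ (h.1 i)
    rw [this]
  · rfl

lemma Pp_ext (k m M : ℕ) (h : m ≤ M) :
    (∑ j : Fin k → Fin (M + 1),
      if (∀ i, 1 ≤ (j i : ℕ)) ∧ (∑ i, (j i : ℕ)) = m then
        (List.ofFn fun i => a ((j i : ℕ))).prod else 0) = Pp a k m := by
  classical
  rw [Pp, ← Finset.sum_filter, ← Finset.sum_filter]
  apply Finset.sum_nbij' (i := fun (j : Fin k → Fin (M + 1)) (idx : Fin k) =>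
      (⟨min ((j idx : ℕ)) m, by omega⟩ : Fin (m + 1)))
    (j := fun (j : Fin k → Fin (m + 1)) (idx : Fin k) =>
      (⟨(j idx : ℕ), by omega⟩ : Fin (M + 1)))
  · intro j hj
    simp only [Finset.mem_filter, Finset.mem_univ, true_and] at hj ⊢
    have hle : ∀ idx, (j idx : ℕ) ≤ m := by
      intro idx
      calc (j idx : ℕ) ≤ ∑ i, (j i : ℕ) := Finset.single_le_sum (f := fun i => ((j i : ℕ))) (fun i _ => Nat.zero_le _) (Finset.mem_univ idx)
      _ = m := hj.2
    constructor
    · intro i; have := hj.1 i; simp [Nat.min_eq_left (hle i)]; omega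
    · have : (∑ i, ((((fun (idx : Fin k) =>
          (⟨min ((j idx : ℕ)) m, by omega⟩ : Fin (m + 1))) i) : ℕ))) = ∑ i, ((j i : ℕ)) :=
        Finset.sum_congr rfl fun i _ => by simp [Nat.min_eq_left (hle i)]
      rw [this, hj.2]
  · intro j hj
    simp only [Finset.mem_filter, Finset.mem_univ, true_and] at hj ⊢
    exact hj
  · intro j hj
    simp only [Finset.mem_filter, Finset.mem_univ, true_and] at hj
    have hle : ∀ idx, (j idx : ℕ) ≤ m := by
      intro idx
      calc (j idx : ℕ) ≤ ∑ i, (j i : ℕ) := Finset.single_le_sum (f := fun i => ((j i : ℕ))) (fun i _ => Nat.zero_le _) (Finset.mem_univ idx)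
      _ = m := hj.2
    funext idx
    apply Fin.ext
    simp [Nat.min_eq_left (hle idx)]
  · intro j hj
    funext idx
    apply Fin.ext
    simp [Nat.min_eq_left (Nat.lt_succ_iff.mp (j idx).isLt)]
  · intro j hj
    simp only [Finset.mem_filter, Finset.mem_univ, true_and] at hj
    have hle : ∀ idx, (j idx : ℕ) ≤ m := by
      intro idx
      calc (j idx : ℕ) ≤ ∑ i, (j i : ℕ) := Finset.single_le_sum (f := fun i => ((j i : ℕ))) (fun i _ => Nat.zero_le _) (Finset.mem_univ idx)
      _ = m := hj.2
    have he : (fun (i : Fin k) => a ((((fun (idx : Fin k) =>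
        (⟨min ((j idx : ℕ)) m, by omega⟩ : Fin (m + 1))) i) : ℕ))) = fun i => a ((j i : ℕ)) := by
      funext i
      simp [Nat.min_eq_left (hle i)]
    rw [he]

lemma Pp_succ (k m : ℕ) :
    Pp a (k + 1) m =
      ∑ p ∈ Finset.range (m + 1), if 1 ≤ p then a p * Pp a k (m - p) else 0 := by
  rw [Pp, ← Fintype.sum_equiv (Fin.consEquiv (fun _ : Fin (k + 1) => Fin (m + 1)))
    (fun pt : Fin (m + 1) × (Fin k → Fin (m + 1)) =>
      if (∀ i, 1 ≤ ((Fin.cons pt.1 pt.2 : Fin (k+1) → Fin (m+1)) i : ℕ)) ∧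
          (∑ i, ((Fin.cons pt.1 pt.2 : Fin (k+1) → Fin (m+1)) i : ℕ)) = m then
        (List.ofFn fun i => a (((Fin.cons pt.1 pt.2 : Fin (k+1) → Fin (m+1)) i : ℕ))).prod
      else 0) _ (fun pt => rfl)]
  rw [Fintype.sum_prod_type, Finset.sum_range fun p => _]
  apply Finset.sum_congr rfl
  intro p _
  have hp : (p : ℕ) ≤ m := Nat.lt_succ_iff.mp p.isLt
  by_cases h1 : 1 ≤ (p : ℕ)
  · rw [if_pos h1, ← Pp_ext a k (m - (p : ℕ)) m (Nat.sub_le _ _), Finset.mul_sum]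
    apply Finset.sum_congr rfl
    intro t _
    rw [mul_ite, mul_zero]
    have hcond : ((∀ i, 1 ≤ ((Fin.cons p t : Fin (k+1) → Fin (m+1)) i : ℕ)) ∧
        (∑ i, ((Fin.cons p t : Fin (k+1) → Fin (m+1)) i : ℕ)) = m) ↔
        ((∀ i, 1 ≤ (t i : ℕ)) ∧ (∑ i, (t i : ℕ)) = m - (p : ℕ)) := by
      rw [Fin.forall_fin_succ]
      simp only [Fin.cons_zero, Fin.cons_succ]
      have hsum : (∑ i : Fin (k+1), ((Fin.cons p t : Fin (k+1) → Fin (m+1)) i : ℕ)) =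
          (p : ℕ) + ∑ i, (t i : ℕ) := by
        rw [show (fun i => ((Fin.cons p t : Fin (k+1) → Fin (m+1)) i : ℕ)) =
          (Fin.cons (p : ℕ) (fun i => (t i : ℕ)) : Fin (k+1) → ℕ) from funext fun i => by
            induction i using Fin.cases <;> simp, Fin.sum_cons]
      rw [hsum]
      constructor
      · rintro ⟨⟨_, h2⟩, h3⟩; exact ⟨h2, by omega⟩
      · rintro ⟨h2, h3⟩; exact ⟨⟨h1, h2⟩, by omega⟩
    rw [if_congr hcond rfl rfl]
    split
    · rw [show (List.ofFn fun i => a (((Fin.cons p t : Fin (k+1) → Fin (m+1)) i : ℕ))) =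
        a (p : ℕ) :: List.ofFn fun i => a ((t i : ℕ)) by
          rw [List.ofFn_succ]; simp]
      rw [List.prod_cons]
    · rfl
  · rw [if_neg h1]
    apply Finset.sum_eq_zero
    intro t _
    rw [if_neg]
    rintro ⟨hc, -⟩
    exact h1 (by simpa using hc 0)

end Aux

lemma coeff_pow_eq_Pp (h : PowerSeries ℂ) (h0 : PowerSeries.coeff (R := ℂ) 0 h = 0) (k m : ℕ) :
    PowerSeries.coeff (R := ℂ) m (h ^ k) = Pp (fun j => PowerSeries.coeff (R := ℂ) j h) k m := by
  induction k generalizing m with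
  | zero => rw [pow_zero, Pp_zero_left, PowerSeries.coeff_one]
  | succ k ih =>
    rw [pow_succ', PowerSeries.coeff_mul, Finset.Nat.sum_antidiagonal_eq_sum_range_succ_mk,
      Pp_succ]
    apply Finset.sum_congr rfl
    intro p _
    by_cases h1 : 1 ≤ p
    · rw [if_pos h1, ih]
    · have hp0 : p = 0 := by omega
      rw [if_neg h1, hp0, h0, zero_mul]

lemma coeff_one_add_pow (h : PowerSeries ℂ) (k m : ℕ) :
    PowerSeries.coeff (R := ℂ) m ((1 + h) ^ k) =
      ∑ i ∈ Finset.range (k + 1), (k.choose i : ℂ) * PowerSeries.coeff (R := ℂ) m (h ^ i) := by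
  rw [add_comm, add_pow, map_sum]
  apply Finset.sum_congr rfl
  intro i _
  rw [one_pow, mul_one]
  rw [show ((k.choose i : ℕ) : PowerSeries ℂ) = PowerSeries.C (R := ℂ) ((k.choose i : ℕ) : ℂ) from (map_natCast (PowerSeries.C (R := ℂ)) _).symm]
  rw [PowerSeries.coeff_mul_C, mul_comm]

lemma coeff_g_pow (g : PowerSeries ℂ)
    (hg0 : PowerSeries.coeff (R := ℂ) 0 g = 0) (hg1 : PowerSeries.coeff (R := ℂ) 1 g = 1)
    (k n : ℕ) (hk : k ≤ n) :
    PowerSeries.coeff (R := ℂ) n (g ^ k) =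
      ∑ i ∈ Finset.range (k + 1), (k.choose i : ℂ) *
        Pp (fun j => PowerSeries.coeff (R := ℂ) (j + 1) g) i (n - k) := by
  set h : PowerSeries ℂ := PowerSeries.mk fun j => if j = 0 then 0 else PowerSeries.coeff (R := ℂ) (j + 1) g with hh
  have h0 : PowerSeries.coeff (R := ℂ) 0 h = 0 := by simp [hh]
  have hgx : g = PowerSeries.X * (1 + h) := by
    ext N
    cases N with
    | zero => rw [PowerSeries.coeff_zero_X_mul, hg0]
    | succ N =>
      rw [PowerSeries.coeff_succ_X_mul, map_add, PowerSeries.coeff_one, hh,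
        PowerSeries.coeff_mk]
      cases N with
      | zero => simpa using hg1
      | succ N => simp
  have key : PowerSeries.coeff (R := ℂ) n (g ^ k) = PowerSeries.coeff (R := ℂ) (n - k) ((1 + h) ^ k) := by
    conv_lhs => rw [hgx, mul_pow, show n = (n - k) + k by omega]
    rw [PowerSeries.coeff_X_pow_mul]
  rw [key, coeff_one_add_pow]
  apply Finset.sum_congr rfl
  intro i _
  rw [coeff_pow_eq_Pp h h0, Pp_congr (fun j => PowerSeries.coeff (R := ℂ) j h)
    (fun j => PowerSeries.coeff (R := ℂ) (j + 1) g) (fun j hj => show PowerSeries.coeff (R := ℂ) j h = PowerSeries.coeff (R := ℂ) (j + 1) g by rw [hh, PowerSeries.coeff_mk, if_neg (show ¬ j = 0 by omega)])]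

/-- For `f(x) = 1 + Σ_{n≥1} x^n b_n(f)` (so `b_n(f) = coeff_n f`) and
`g(x) = x + Σ_{n≥1} x^{n+1} a_n(g)` (so `a_n(g) = coeff_{n+1} g`),
`b_n(f∘g) = b_n(f) + Σ_{m=1}^{n-1} Q^{n-m-1}_m(a_*(g)) b_{n-m}(f)` for `n ≥ 1`. -/
theorem comp_coeff_b (f g : PowerSeries ℂ)
    (hf0 : PowerSeries.coeff (R := ℂ) 0 f = 1)
    (hg0 : PowerSeries.coeff (R := ℂ) 0 g = 0) (hg1 : PowerSeries.coeff (R := ℂ) 1 g = 1)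
    (n : ℕ) (hn : 1 ≤ n) :
    PowerSeries.coeff (R := ℂ) n (comp f g) =
      PowerSeries.coeff (R := ℂ) n f +
        ∑ m ∈ Finset.Icc 1 (n - 1),
          Qp (fun j => PowerSeries.coeff (R := ℂ) (j + 1) g) (n - m - 1) m *
            PowerSeries.coeff (R := ℂ) (n - m) f := by
  set a : ℕ → ℂ := fun j => PowerSeries.coeff (R := ℂ) (j + 1) g with ha
  -- key: coefficient of g^k for 1 ≤ k ≤ n-1
  have hmain : ∀ k, 1 ≤ k → k ≤ n - 1 →
      PowerSeries.coeff (R := ℂ) n (g ^ k) = Qp a (k - 1) (n - k) := by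
    intro k hk1 hk2
    have hm1 : 1 ≤ n - k := by omega
    rw [coeff_g_pow g hg0 hg1 k n (by omega)]
    have step1 : (∑ i ∈ Finset.range (k + 1), (k.choose i : ℂ) * Pp a i (n - k)) =
        ∑ i ∈ Finset.range (k + (n - k) + 1), (k.choose i : ℂ) * Pp a i (n - k) := by
      apply Finset.sum_subset
      · intro i hi
        simp only [Finset.mem_range] at hi ⊢; omega
      · intro i _ hi
        simp only [Finset.mem_range, not_lt] at hi
        rw [Nat.choose_eq_zero_of_lt (by omega), Nat.cast_zero, zero_mul]
    have step2 : (∑ i ∈ Finset.range (k + (n - k) + 1), (k.choose i : ℂ) * Pp a i (n - k)) =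
        ∑ i ∈ Finset.Icc 1 (n - k), (k.choose i : ℂ) * Pp a i (n - k) := by
      symm
      apply Finset.sum_subset
      · intro i hi
        simp only [Finset.mem_Icc] at hi
        simp only [Finset.mem_range]; omega
      · intro i _ hi
        simp only [Finset.mem_Icc, not_and_or, not_le] at hi
        rcases hi with hi | hi
        · have : i = 0 := by omega
          rw [this, Pp_zero_left, if_neg (by omega), mul_zero]
        · rw [Pp_eq_zero_of_lt a i (n - k) hi, mul_zero]
    rw [step1, step2, Qp]
    apply Finset.sum_congr rfl
    intro i _
    rw [nsmul_eq_mul, show k - 1 + 1 = k by omega]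
  -- coefficient of g^n
  have hgn : PowerSeries.coeff (R := ℂ) n (g ^ n) = 1 := by
    rw [coeff_g_pow g hg0 hg1 n n le_rfl, Nat.sub_self]
    rw [Finset.sum_eq_single_of_mem 0 (Finset.mem_range.mpr (by omega))]
    · rw [Pp_zero_right, if_pos rfl, Nat.choose_zero_right, Nat.cast_one, one_mul]
    · intro i _ hi
      rw [Pp_zero_right, if_neg hi, mul_zero]
  -- unfold comp
  rw [show PowerSeries.coeff (R := ℂ) n (comp f g) =
      ∑ k ∈ Finset.range (n + 1), PowerSeries.coeff (R := ℂ) k f * PowerSeries.coeff (R := ℂ) n (g ^ k) from by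
    rw [comp, PowerSeries.coeff_mk]]
  have drop0 : (∑ k ∈ Finset.range (n + 1),
      PowerSeries.coeff (R := ℂ) k f * PowerSeries.coeff (R := ℂ) n (g ^ k)) =
      ∑ k ∈ Finset.Icc 1 n, PowerSeries.coeff (R := ℂ) k f * PowerSeries.coeff (R := ℂ) n (g ^ k) := by
    symm
    apply Finset.sum_subset
    · intro i hi
      simp only [Finset.mem_Icc] at hi
      simp only [Finset.mem_range]; omega
    · intro i hi2 hi
      simp only [Finset.mem_Icc, not_and_or, not_le] at hi
      simp only [Finset.mem_range] at hi2
      have : i = 0 := by omega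
      rw [this, pow_zero, PowerSeries.coeff_one, if_neg (by omega), mul_zero]
  rw [drop0]
  have peel : (∑ k ∈ Finset.Icc 1 n, PowerSeries.coeff (R := ℂ) k f * PowerSeries.coeff (R := ℂ) n (g ^ k)) =
      (∑ k ∈ Finset.Icc 1 (n - 1), PowerSeries.coeff (R := ℂ) k f * PowerSeries.coeff (R := ℂ) n (g ^ k)) +
        PowerSeries.coeff (R := ℂ) n f * PowerSeries.coeff (R := ℂ) n (g ^ n) := by
    rw [show n = (n - 1) + 1 by omega] at *
    exact Finset.sum_Icc_succ_top (by omega) _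
  rw [peel, hgn, mul_one, add_comm]
  congr 1
  apply Finset.sum_nbij' (i := fun k => n - k) (j := fun m => n - m)
  · intro k hk; simp only [Finset.mem_Icc] at *; omega
  · intro k hk; simp only [Finset.mem_Icc] at *; omega
  · intro k hk; simp only [Finset.mem_Icc] at hk; omega
  · intro k hk; simp only [Finset.mem_Icc] at hk; omega
  · intro k hk
    simp only [Finset.mem_Icc] at hk
    rw [hmain k hk.1 hk.2, show n - (n - k) = k by omega]
    exact mul_comm _ _
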